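/- Let g ≥ 4. In Γ_{g,1}, for every i with 5 ≤ i ≤ g+1, the element y_i anti-commutes with d^{-1}d′ in the sense that y_i d^{-1} d′ = d d′^{-1} y_i (equivalently, d^{-1} d′ y_i = y_i d d′^{-1}). -/

import Mathlib

/-! # Common setup: profinite groups, Ẑ, free profinite F₂, profinite completions,
the Grothendieck–Teichmüller group, braid groups and mapping class groups. -/

universe u

/-- A (topological) group is profinite if it is a compact, Hausdorff, totally
disconnected topological group. -/
class IsProfiniteGroup (G : Type) [Group G] [TopologicalSpace G] extends
    IsTopologicalGroup G, CompactSpace G, T2Space G, TotallyDisconnectedSpace G : Prop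

/-- A model of Ẑ, the profinite completion of ℤ: a profinite commutative topological
ring whose underlying additive profinite group is the free profinite group on the
single (topological) generator `1`. These properties characterize Ẑ uniquely. -/
structure ZhatModel : Type 1 where
  R : Type
  [commRing : CommRing R]
  [top : TopologicalSpace R]
  [topRing : IsTopologicalRing R]
  [cpt : CompactSpace R]
  [t2 : T2Space R]
  [td : TotallyDisconnectedSpace R]
  free : ∀ (G : Type) [Group G] [TopologicalSpace G] [IsProfiniteGroup G] (a : G),
    ∃! φ : ContinuousMonoidHom (Multiplicative R) G,
      φ (Multiplicative.ofAdd (1 : R)) = a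

attribute [instance] ZhatModel.commRing ZhatModel.top ZhatModel.topRing
  ZhatModel.cpt ZhatModel.t2 ZhatModel.td

/-- `Z.pow a l` is the profinite power `a ^ l` for `l ∈ Ẑ`: the image of `l` under
the unique continuous homomorphism `Ẑ → G` sending `1` to `a`. -/
noncomputable def ZhatModel.pow (Z : ZhatModel) {G : Type} [Group G] [TopologicalSpace G]
    [IsProfiniteGroup G] (a : G) (l : Z.R) : G :=
  (Z.free G a).exists.choose (Multiplicative.ofAdd l)

/-- A model of the free profinite group `F̂₂` on two generators `x`, `y`. -/
structure F2Model : Type 1 where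
  F : Type
  [grp : Group F]
  [top : TopologicalSpace F]
  [pro : IsProfiniteGroup F]
  x : F
  y : F
  free : ∀ (G : Type) [Group G] [TopologicalSpace G] [IsProfiniteGroup G] (a b : G),
    ∃! φ : ContinuousMonoidHom F G, φ x = a ∧ φ y = b

attribute [instance] F2Model.grp F2Model.top F2Model.pro

/-- `F2.eval f a b` is `f(a,b)`: the image of `f ∈ F̂₂` under the unique continuous
homomorphism `F̂₂ → G` with `x ↦ a`, `y ↦ b`. -/
noncomputable def F2Model.eval (F2 : F2Model) {G : Type} [Group G] [TopologicalSpace G]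
    [IsProfiniteGroup G] (f : F2.F) (a b : G) : G :=
  (F2.free G a b).exists.choose f

/-- A model of the profinite completion of a (discrete) group `B`: a profinite group
`C` together with a homomorphism `ι : B → C` such that every homomorphism from `B`
to a profinite group extends uniquely to a continuous homomorphism on `C`.  This
universal property characterizes the profinite completion uniquely. -/
structure ProfiniteCompletionModel (B : Type) [Group B] : Type 1 where
  C : Type
  [grp : Group C]
  [top : TopologicalSpace C]
  [pro : IsProfiniteGroup C]
  ι : B →* C
  free : ∀ (H : Type) [Group H] [TopologicalSpace H] [IsProfiniteGroup H] (ψ : B →* H),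
    ∃! φ : ContinuousMonoidHom C H, ∀ b, φ (ι b) = ψ b

attribute [instance] ProfiniteCompletionModel.grp ProfiniteCompletionModel.top
  ProfiniteCompletionModel.pro

/-! ## Generic words in a group -/

section Words

variable {G : Type*} [Group G]

/-- `genY b k = b (k-1) ⋯ b 2 (b 1)² b 2 ⋯ b (k-1)` (equal to `1` for `k ≤ 1`). -/
def genY (b : ℕ → G) : ℕ → G
  | 0 => 1
  | 1 => 1
  | 2 => b 1 * b 1
  | (k+3) => b (k+2) * genY b (k+2) * b (k+2)

/-- `genProd b k = b 1 * b 2 * ⋯ * b k`. -/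
def genProd (b : ℕ → G) : ℕ → G
  | 0 => 1
  | (k+1) => genProd b k * b (k+1)

/-- `genW b k = (b 1 ⋯ b (k-1))^k`. -/
def genW (b : ℕ → G) (k : ℕ) : G := (genProd b (k-1))^k

end Words

/-! ## Braid groups -/

/-- Braid relations on `n` generators (indexed by `Fin n`, where index `i`
stands for `σ_{i+1}`). -/
def braidRels (n : ℕ) : Set (FreeGroup (Fin n)) :=
  {r | (∃ i j : Fin n, (i : ℕ) + 1 = (j : ℕ) ∧
          r = FreeGroup.of i * FreeGroup.of j * FreeGroup.of i *
              (FreeGroup.of j * FreeGroup.of i * FreeGroup.of j)⁻¹) ∨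
       (∃ i j : Fin n, (i : ℕ) + 2 ≤ (j : ℕ) ∧
          r = FreeGroup.of i * FreeGroup.of j * (FreeGroup.of j * FreeGroup.of i)⁻¹)}

/-- The Artin braid group `B_n` on `n` strands, with the `n-1` generators
`σ_1, …, σ_{n-1}`. -/
abbrev BraidGroup (n : ℕ) : Type := PresentedGroup (braidRels (n-1))

/-- The generator `σ_i` of the braid group `B_n` (junk value `1` when `i` is
out of range). -/
def σB (n : ℕ) (i : ℕ) : BraidGroup n :=
  if h : 1 ≤ i ∧ i < n then PresentedGroup.of (⟨i - 1, by omega⟩ : Fin (n-1)) else 1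

/-- `η_i = σ_{i-1} ⋯ σ₂ σ₁² σ₂ ⋯ σ_{i-1}` in `B_n`. -/
def ηB (n : ℕ) (i : ℕ) : BraidGroup n := genY (σB n) i

/-- `ω_i = (σ₁ ⋯ σ_{i-1})^i` in `B_n`. -/
def ωB (n : ℕ) (i : ℕ) : BraidGroup n := genW (σB n) i

/-! ## The Grothendieck-Teichmüller group -/

/-- The standard generators of the pure braid group `P₄ ⊂ B₄`, in the order
`x₁₂, x₁₃, x₁₄, x₂₃, x₂₄, x₃₄`. -/
def xGen : Fin 6 → BraidGroup 4 :=
  ![(σB 4 1)^2,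
    σB 4 2 * (σB 4 1)^2 * (σB 4 2)⁻¹,
    σB 4 3 * σB 4 2 * (σB 4 1)^2 * (σB 4 2)⁻¹ * (σB 4 3)⁻¹,
    (σB 4 2)^2,
    σB 4 3 * (σB 4 2)^2 * (σB 4 3)⁻¹,
    (σB 4 3)^2]

/-- The pure braid group `P₄` as a subgroup of `B₄`. -/
def P4 : Subgroup (BraidGroup 4) := Subgroup.closure (Set.range xGen)

/-- The generators `x_{ij}` as elements of `P₄`. -/
def xP (k : Fin 6) : P4 := ⟨xGen k, Subgroup.subset_closure (Set.mem_range_self k)⟩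

/-- The pair `(l, f)` belongs to the Grothendieck–Teichmüller group `GT`:
`l ∈ Ẑ×`, `l - 1 ∈ 2Ẑ`, `f` lies in the closure of the commutator subgroup of
`F̂₂` and the relations (I), (II), (III) hold. -/
def IsGT (Z : ZhatModel) (F2 : F2Model) (l : Z.R) (f : F2.F) : Prop :=
  IsUnit l ∧ (∃ m : Z.R, l - 1 = 2 * m) ∧
  f ∈ (commutator F2.F).topologicalClosure ∧
  -- (I)
  F2.eval f F2.x F2.y * F2.eval f F2.y F2.x = 1 ∧
  -- (II)
  (∀ m : Z.R, l - 1 = 2 * m →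
    F2.eval f (F2.x * F2.y)⁻¹ F2.x * Z.pow ((F2.x * F2.y)⁻¹) m *
      F2.eval f F2.y ((F2.x * F2.y)⁻¹) * Z.pow F2.y m *
      F2.eval f F2.x F2.y * Z.pow F2.x m = 1) ∧
  -- (III), in (any model of) the profinite completion of the pure braid group P₄
  (∀ CP : ProfiniteCompletionModel P4,
    F2.eval f (CP.ι (xP 0)) (CP.ι (xP 3) * CP.ι (xP 4)) *
      F2.eval f (CP.ι (xP 1) * CP.ι (xP 3)) (CP.ι (xP 5)) =
    F2.eval f (CP.ι (xP 3)) (CP.ι (xP 5)) *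
      F2.eval f (CP.ι (xP 0) * CP.ι (xP 1)) (CP.ι (xP 4) * CP.ι (xP 5)) *
      F2.eval f (CP.ι (xP 0)) (CP.ι (xP 3)))
/-! ## Words for the mapping class group -/

section MCGWords

variable {G : Type*} [Group G] (d : G) (a : ℕ → G)

/-- `t_k = a_{2k} a_{2k-1} a_{2k+1} a_{2k}`. -/
def tA (k : ℕ) : G := a (2*k) * a (2*k - 1) * a (2*k + 1) * a (2*k)

/-- `d' = y₅ d y₅⁻¹`. -/
def dpA : G := genY a 5 * d * (genY a 5)⁻¹

/-- `d₃ = (t₁⁻¹t₂⁻¹ d t₂t₁)(t₂⁻¹ d t₂) d a₁⁻¹ a₃⁻¹ a₅⁻¹`. -/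
def d3A : G :=
  ((tA a 1)⁻¹ * (tA a 2)⁻¹ * d * tA a 2 * tA a 1) * ((tA a 2)⁻¹ * d * tA a 2) * d *
    (a 1)⁻¹ * (a 3)⁻¹ * (a 5)⁻¹

/-- The element `t₂t₁t₃t₂`. -/
def tfour : G := tA a 2 * tA a 1 * tA a 3 * tA a 2

/-- The relator expressing relation (C'): `d'` commutes with `(t₂t₁t₃t₂) d (t₂t₁t₃t₂)⁻¹`. -/
def relCpA : G :=
  dpA d a * (tfour a * d * (tfour a)⁻¹) * (dpA d a)⁻¹ * (tfour a * d * (tfour a)⁻¹)⁻¹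

/-- `v₁ = d'`, `v_i = (t_{i-1} t_i) v_{i-1} (t_{i-1} t_i)⁻¹`. -/
def vA : ℕ → G
  | 0 => 1
  | 1 => dpA d a
  | (i+2) => (tA a (i+1) * tA a (i+2)) * vA (i+1) * (tA a (i+1) * tA a (i+2))⁻¹

/-- `u_i = a_{2i} a_{2i+1} a_{2i+2} v_i (a_{2i+2} a_{2i+1} a_{2i} a_{2i-1})⁻¹`. -/
def uA (i : ℕ) : G :=
  a (2*i) * a (2*i+1) * a (2*i+2) * vA d a i *
    (a (2*i+2) * a (2*i+1) * a (2*i) * a (2*i - 1))⁻¹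

/-- `d_g = (u₁⋯u_{g-1})⁻¹ a₁ (u₁⋯u_{g-1})`. -/
def dgA (g : ℕ) : G :=
  (genProd (uA d a) (g-1))⁻¹ * a 1 * genProd (uA d a) (g-1)

/-- The relator of relation (D): `y_{2g+1} d_g y_{2g+1}⁻¹ = d_g`. -/
def relDA (g : ℕ) : G :=
  genY a (2*g+1) * dgA d a g * (genY a (2*g+1))⁻¹ * (dgA d a g)⁻¹

/-- `genProd2 b k = b 2 * b 3 * ⋯ * b k`. -/
def genProd2 (b : ℕ → G) : ℕ → G
  | 0 => 1
  | 1 => 1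
  | (k+2) => genProd2 b (k+1) * b (k+2)

/-- `TTA a i = (t₂⋯t_i)·(t₁⋯t_{i-1})`. -/
def TTA (i : ℕ) : G := genProd2 (tA a) i * genProd (tA a) (i-1)

/-- The sequence `d₁ = a₁`, `d₂ = d`,
`d_{i+1} = a_{2i+1}⁻¹ a_{2i-1}⁻¹ d_{i-1}⁻¹ g_{2,i} g_{1,i} d_i`
where `g_{1,i} = t_i⁻¹ d_i t_i` and `g_{2,i} = (t₂⋯t_i t₁⋯t_{i-1})⁻¹ d (t₂⋯t_i t₁⋯t_{i-1})`. -/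
def dSeq : ℕ → G
  | 0 => 1
  | 1 => a 1
  | 2 => d
  | (i+3) =>
    (a (2*(i+2)+1))⁻¹ * (a (2*(i+2) - 1))⁻¹ * (dSeq (i+1))⁻¹ *
      ((TTA a (i+2))⁻¹ * d * TTA a (i+2)) *
      ((tA a (i+2))⁻¹ * dSeq (i+2) * tA a (i+2)) * dSeq (i+2)

/-- `g_{1,i} = t_i⁻¹ d_i t_i`. -/
def g1A (i : ℕ) : G := (tA a i)⁻¹ * dSeq d a i * tA a i

/-- `g_{2,i} = (t₂⋯t_i · t₁⋯t_{i-1})⁻¹ d (t₂⋯t_i · t₁⋯t_{i-1})`. -/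
def g2A (i : ℕ) : G := (TTA a i)⁻¹ * d * TTA a i

/-- `d′_i = y_{2i+1} d_i y_{2i+1}⁻¹`. -/
def dpSeq (i : ℕ) : G := genY a (2*i+1) * dSeq d a i * (genY a (2*i+1))⁻¹

/-- `g′_{1,i} = t_i⁻¹ d′_i t_i`. -/
def g1pA (i : ℕ) : G := (tA a i)⁻¹ * dpSeq d a i * tA a i

/-- `g′_{2,i} = (t₂⋯t_i · t₁⋯t_{i-1})⁻¹ d′ (t₂⋯t_i · t₁⋯t_{i-1})`. -/
def g2pA (i : ℕ) : G := (TTA a i)⁻¹ * dpA d a * TTA a i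

/-- `W_k = (t₁⋯t_{k-1})^k`. -/
def WWA (k : ℕ) : G := genW (tA a) k

/-- `Y_k = t_{k-1}⋯t₂t₁²t₂⋯t_{k-1}`. -/
def YYA (k : ℕ) : G := genY (tA a) k

end MCGWords

/-! ## The Wajnryb presentation of the mapping class group `Γ_{g,1}` -/

/-- The free-group generator `d`. -/
def dF (g : ℕ) : FreeGroup (Fin (2*g+1)) := FreeGroup.of ⟨0, by omega⟩

/-- The free-group generators `a_i`, `1 ≤ i ≤ 2g` (junk value `1` out of range). -/
def aF (g : ℕ) (i : ℕ) : FreeGroup (Fin (2*g+1)) :=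
  if h : 1 ≤ i ∧ i ≤ 2*g then FreeGroup.of ⟨i, by omega⟩ else 1

/-- The relators of the Wajnryb presentation of `Γ_{g,1}`: relations (A), (B),
(C) (when `g ≥ 3`) and (C') (when `g ≥ 4`). -/
def mcgRels (g : ℕ) : Set (FreeGroup (Fin (2*g+1))) :=
  {r | (∃ i : ℕ, 1 ≤ i ∧ i + 1 ≤ 2*g ∧
          r = aF g i * aF g (i+1) * aF g i * (aF g (i+1) * aF g i * aF g (i+1))⁻¹) ∨
       (∃ i j : ℕ, 1 ≤ i ∧ j ≤ 2*g ∧ i + 2 ≤ j ∧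
          r = aF g i * aF g j * (aF g j * aF g i)⁻¹) ∨
       (r = dF g * aF g 4 * dF g * (aF g 4 * dF g * aF g 4)⁻¹) ∨
       (∃ j : ℕ, 1 ≤ j ∧ j ≤ 2*g ∧ j ≠ 4 ∧
          r = dF g * aF g j * (aF g j * dF g)⁻¹) ∨
       (r = dF g * dpA (dF g) (aF g) * ((aF g 1 * aF g 2 * aF g 3)^4)⁻¹) ∨
       (3 ≤ g ∧ r = d3A (dF g) (aF g) * aF g 6 * d3A (dF g) (aF g) *
          (aF g 6 * d3A (dF g) (aF g) * aF g 6)⁻¹) ∨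
       (4 ≤ g ∧ r = relCpA (dF g) (aF g))}

/-- The mapping class group `Γ_{g,1}` of a genus-`g` surface with one marked point,
via its Wajnryb presentation. -/
abbrev Gamma1 (g : ℕ) : Type := PresentedGroup (mcgRels g)

/-- The generator `d` of `Γ_{g,1}`. -/
def dM (g : ℕ) : Gamma1 g := PresentedGroup.of ⟨0, by omega⟩

/-- The generators `a_i` of `Γ_{g,1}` (junk value `1` out of range). -/
def aM (g : ℕ) (i : ℕ) : Gamma1 g :=
  if h : 1 ≤ i ∧ i ≤ 2*g then PresentedGroup.of ⟨i, by omega⟩ else 1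

/-- The mapping class group `Γ_{g,0}` of a closed genus-`g` surface, obtained from the
Wajnryb presentation of `Γ_{g,1}` by adding the single relation (D). -/
abbrev Gamma0 (g : ℕ) : Type :=
  PresentedGroup (mcgRels g ∪ {relDA (dF g) (aF g) g})

/-- The generator `d` of `Γ_{g,0}`. -/
def dM0 (g : ℕ) : Gamma0 g := PresentedGroup.of ⟨0, by omega⟩

/-- The generators `a_i` of `Γ_{g,0}` (junk value `1` out of range). -/
def aM0 (g : ℕ) (i : ℕ) : Gamma0 g :=
  if h : 1 ≤ i ∧ i ≤ 2*g then PresentedGroup.of ⟨i, by omega⟩ else 1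


/-! ## Auxiliary lemmas for Statement 13 -/

section BraidAux

variable {G : Type*} [Group G]

set_option maxHeartbeats 1000000 in
lemma braid_calc (a1 a2 a3 a4 w y : G)
    (h12 : a1*a2*a1 = a2*a1*a2) (h23 : a2*a3*a2 = a3*a2*a3) (h34 : a3*a4*a3 = a4*a3*a4)
    (h13 : a1*a3 = a3*a1) (h14 : a1*a4 = a4*a1) (h24 : a2*a4 = a4*a2)
    (hw : w = (a1*a2*a3)^4) (hy : y = a4*(a3*(a2*(a1*a1)*a2)*a3)*a4) :
    w * y = y * w := by
  have h12' : ∀ x : G, a1*(a2*(a1*x)) = a2*(a1*(a2*x)) := fun x => by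
    rw [← mul_assoc, ← mul_assoc, h12, mul_assoc, mul_assoc]
  have h12i : ∀ x : G, a2*(a1*(a2*x)) = a1*(a2*(a1*x)) := fun x => (h12' x).symm
  have h23' : ∀ x : G, a2*(a3*(a2*x)) = a3*(a2*(a3*x)) := fun x => by
    rw [← mul_assoc, ← mul_assoc, h23, mul_assoc, mul_assoc]
  have h23i : ∀ x : G, a3*(a2*(a3*x)) = a2*(a3*(a2*x)) := fun x => (h23' x).symm
  have h34' : ∀ x : G, a3*(a4*(a3*x)) = a4*(a3*(a4*x)) := fun x => by
    rw [← mul_assoc, ← mul_assoc, h34, mul_assoc, mul_assoc]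
  have h34i : ∀ x : G, a4*(a3*(a4*x)) = a3*(a4*(a3*x)) := fun x => (h34' x).symm
  have h13' : ∀ x : G, a1*(a3*x) = a3*(a1*x) := fun x => by
    rw [← mul_assoc, h13, mul_assoc]
  have h13i : ∀ x : G, a3*(a1*x) = a1*(a3*x) := fun x => (h13' x).symm
  have h14' : ∀ x : G, a1*(a4*x) = a4*(a1*x) := fun x => by
    rw [← mul_assoc, h14, mul_assoc]
  have h14i : ∀ x : G, a4*(a1*x) = a1*(a4*x) := fun x => (h14' x).symm
  have h24' : ∀ x : G, a2*(a4*x) = a4*(a2*x) := fun x => by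
    rw [← mul_assoc, h24, mul_assoc]
  have h24i : ∀ x : G, a4*(a2*x) = a2*(a4*x) := fun x => (h24' x).symm
  obtain ⟨c4, hc4⟩ : ∃ c : G, c = a1*a2*a3 := ⟨_, rfl⟩
  obtain ⟨c5, hc5⟩ : ∃ c : G, c = c4*a4 := ⟨_, rfl⟩
  have S1 : SemiconjBy c4 a1 a2 := by
    show c4 * a1 = a2 * c4
    rw [hc4]; simp only [mul_assoc]; rw [← h13, h12']
  have S2 : SemiconjBy c4 a2 a3 := by
    show c4 * a2 = a3 * c4
    rw [hc4]; simp only [mul_assoc]; rw [← mul_assoc a2 a3 a2, h23, mul_assoc a3 a2 a3, h13']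
  have S3 : SemiconjBy (c4*c4) a3 a1 := by
    show (c4*c4) * a3 = a1 * (c4*c4)
    rw [hc4]; simp only [mul_assoc]
    rw [h13i, h23i, h12i, h13']
  have T1 : SemiconjBy c5 a1 a2 := by
    show c5 * a1 = a2 * c5
    rw [hc5, hc4]; simp only [mul_assoc]
    rw [← h14, h13i, h12']
  have T2 : SemiconjBy c5 a2 a3 := by
    show c5 * a2 = a3 * c5
    rw [hc5, hc4]; simp only [mul_assoc]
    rw [← h24, h23', h13']
  have T3 : SemiconjBy c5 a3 a4 := by
    show c5 * a3 = a4 * c5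
    rw [hc5, hc4]; simp only [mul_assoc]
    rw [← mul_assoc a3 a4 a3, h34, mul_assoc a4 a3 a4, h24', h14']
  have U1 : a4 * (c4 * a4) = c4 * (a4 * a3) := by
    rw [hc4]; simp only [mul_assoc]
    rw [h14i, h24i, ← mul_assoc a4 a3 a4, ← h34, mul_assoc]
  have U2 : a4*(a3*(c4*a4)) = c4*(a4*(a3*a2)) := by
    rw [hc4]; simp only [mul_assoc]
    rw [h13i, h14i, h23i, h24i, h24, h34i]
  have U3 : a4*(a3*(a2*(c4*a4))) = c4*(a4*(a3*(a2*a1))) := by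
    rw [hc4]; simp only [mul_assoc]
    rw [h12i, h13i, h14i, h13', h23i, h24i, h14]
    nth_rewrite 2 [h24']
    rw [h34i]
  have hc52 : c5*c5 = c4*(c4*(a4*a3)) := by
    rw [hc5, mul_assoc, U1]
  have hc53 : (c5*c5)*c5 = c4*(c4*(c4*(a4*(a3*a2)))) := by
    rw [hc52, hc5]
    simp only [mul_assoc]
    rw [U2]
  have hc54 : ((c5*c5)*c5)*c5 = c4*(c4*(c4*(c4*(a4*(a3*(a2*a1)))))) := by
    rw [hc53, hc5]
    simp only [mul_assoc]
    rw [U3]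
  have T4 : SemiconjBy (c5*c5) a4 a1 := by
    show (c5*c5) * a4 = a1 * (c5*c5)
    rw [hc52]
    calc c4*(c4*(a4*a3))*a4 = c4*c4*(a4*a3*a4) := by simp only [mul_assoc]
      _ = c4*c4*(a3*a4*a3) := by rw [← h34]
      _ = (c4*c4*a3)*(a4*a3) := by simp only [mul_assoc]
      _ = (a1*(c4*c4))*(a4*a3) := by rw [(S3 : (c4*c4) * a3 = a1 * (c4*c4))]
      _ = a1*(c4*(c4*(a4*a3))) := by simp only [mul_assoc]
  have W1 : Commute (c5^5) a1 := by
    have h := T4.mul_left (T3.mul_left (T2.mul_left T1))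
    rwa [show (c5*c5)*(c5*(c5*c5)) = c5^5 by simp only [pow_succ, pow_zero, one_mul, mul_assoc]] at h
  have W2 : Commute (c5^5) a2 := by
    have h := T1.mul_left (T4.mul_left (T3.mul_left T2))
    rwa [show c5*((c5*c5)*(c5*c5)) = c5^5 by simp only [pow_succ, pow_zero, one_mul, mul_assoc]] at h
  have W3 : Commute (c5^5) a3 := by
    have h := T2.mul_left (T1.mul_left (T4.mul_left T3))
    rwa [show c5*(c5*((c5*c5)*c5)) = c5^5 by simp only [pow_succ, pow_zero, one_mul, mul_assoc]] at h
  have W4 : Commute (c5^5) a4 := by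
    have h := T3.mul_left (T2.mul_left (T1.mul_left T4))
    rwa [show c5*(c5*(c5*(c5*c5))) = c5^5 by simp only [pow_succ, pow_zero, one_mul, mul_assoc]] at h
  have Cy5 : Commute (c5^5) y := by
    rw [hy]
    exact (W4.mul_right ((W3.mul_right ((W2.mul_right (W1.mul_right W1)).mul_right W2)).mul_right W3)).mul_right W4
  have Cc4 : Commute (c5^5) (c4^4) := by
    have h : Commute (c5^5) c4 := by
      rw [hc4]; exact (W1.mul_right W2).mul_right W3
    exact h.pow_right 4
  have hw5 : c5^5 = c4^4 * y := by
    have e : c5^5 = (((c5*c5)*c5)*c5)*c5 := by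
      simp only [pow_succ, pow_zero, one_mul]
    rw [e, hc54, hc5, hc4, hy]
    simp only [pow_succ, pow_zero, one_mul, mul_assoc]
  have hw' : w = c4^4 := by rw [hw, hc4]
  have hy' : y = (c4^4)⁻¹ * c5^5 := by rw [hw5, inv_mul_cancel_left]
  calc w * y = c4^4 * ((c4^4)⁻¹ * c5^5) := by rw [hw', hy']
    _ = c5^5 := mul_inv_cancel_left _ _
    _ = (c4^4)⁻¹ * (c4^4 * c5^5) := (inv_mul_cancel_left _ _).symm
    _ = (c4^4)⁻¹ * (c5^5 * c4^4) := by rw [Cc4.eq]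
    _ = ((c4^4)⁻¹ * c5^5) * c4^4 := by rw [mul_assoc]
    _ = y * w := by rw [← hy', hw']

lemma anticonj (a1 a2 a3 a4 d y p : G)
    (h12 : a1*a2*a1 = a2*a1*a2) (h23 : a2*a3*a2 = a3*a2*a3) (h34 : a3*a4*a3 = a4*a3*a4)
    (h13 : a1*a3 = a3*a1) (h14 : a1*a4 = a4*a1) (h24 : a2*a4 = a4*a2)
    (hd1 : d*a1 = a1*d) (hd2 : d*a2 = a2*d) (hd3 : d*a3 = a3*d)
    (hy : y = a4*(a3*(a2*(a1*a1)*a2)*a3)*a4)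
    (hp : p = y*d*y⁻¹)
    (hB : d * p = (a1*a2*a3)^4) :
    d*p = p*d ∧ y * (d⁻¹*p) = (d⁻¹*p)⁻¹ * y := by
  obtain ⟨w, hw⟩ : ∃ w : G, w = (a1*a2*a3)^4 := ⟨_, rfl⟩
  have Cyw : w*y = y*w := braid_calc a1 a2 a3 a4 w y h12 h23 h34 h13 h14 h24 hw hy
  have Cdw : d*w = w*d := by
    rw [hw]
    exact (((show Commute d a1 from hd1).mul_right (show Commute d a2 from hd2)).mul_right
      (show Commute d a3 from hd3)).pow_right 4
  have hdp : p = d⁻¹ * w := by rw [hw, ← hB, inv_mul_cancel_left]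
  have out1 : d*p = p*d := by
    rw [hdp]
    calc d*(d⁻¹*w) = w := mul_inv_cancel_left _ _
      _ = d⁻¹*(d*w) := (inv_mul_cancel_left _ _).symm
      _ = d⁻¹*(w*d) := by rw [Cdw]
      _ = (d⁻¹*w)*d := by rw [mul_assoc]
  refine ⟨out1, ?_⟩
  have hs : SemiconjBy y d p := by
    show y*d = p*y
    rw [hp, inv_mul_cancel_right]
  have hsi : SemiconjBy y d⁻¹ p⁻¹ := hs.inv_right
  have hyw : SemiconjBy y w w := Cyw.symm
  have hcomb : SemiconjBy y (d⁻¹*(d⁻¹*w)) (p⁻¹*(p⁻¹*w)) := hsi.mul_right (hsi.mul_right hyw)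
  have hcomb' : y * (d⁻¹*(d⁻¹*w)) = (p⁻¹*(p⁻¹*w)) * y := hcomb
  rw [hdp] at hcomb' ⊢
  have eqX : (d⁻¹*w)⁻¹*((d⁻¹*w)⁻¹*w) = (d⁻¹*(d⁻¹*w))⁻¹ := by
    simp only [mul_inv_rev, inv_inv, mul_assoc]
    rw [Cdw, inv_mul_cancel_left]
  rw [eqX] at hcomb'
  calc y * (d⁻¹*(d⁻¹*w)) = (d⁻¹*(d⁻¹*w))⁻¹ * y := hcomb'

lemma map_genY {H : Type*} [Group H] (φ : G →* H) (b : ℕ → G) :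
    ∀ k, φ (genY b k) = genY (fun i => φ (b i)) k
  | 0 => by simp [genY]
  | 1 => by simp [genY]
  | 2 => by simp [genY]
  | (k+3) => by
    have ih := map_genY φ b (k+2)
    simp only [genY, map_mul, ih]

end BraidAux

section GammaAux

/-- The projection from the free group to `Γ_{g,1}`. -/
def πM (g : ℕ) : FreeGroup (Fin (2*g+1)) →* Gamma1 g := PresentedGroup.mk (mcgRels g)

lemma πM_rel {g : ℕ} {r : FreeGroup (Fin (2*g+1))} (h : r ∈ mcgRels g) : πM g r = 1 := by
  have hm : r ∈ Subgroup.normalClosure (mcgRels g) := Subgroup.subset_normalClosure h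
  exact (QuotientGroup.eq_one_iff r).mpr hm

lemma πM_aF (g : ℕ) (i : ℕ) : πM g (aF g i) = aM g i := by
  unfold aF aM
  by_cases h : 1 ≤ i ∧ i ≤ 2*g
  · rw [dif_pos h, dif_pos h]; rfl
  · rw [dif_neg h, dif_neg h]; exact map_one _

lemma πM_dF (g : ℕ) : πM g (dF g) = dM g := rfl

lemma πM_aF_fun (g : ℕ) : (fun i => πM g (aF g i)) = aM g := funext (πM_aF g)

lemma πM_dpA (g : ℕ) : πM g (dpA (dF g) (aF g)) = dpA (dM g) (aM g) := by
  unfold dpA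
  rw [map_mul, map_mul, map_inv, map_genY, πM_aF_fun, πM_dF]

lemma braidM {g : ℕ} (i : ℕ) (h1 : 1 ≤ i) (h2 : i+1 ≤ 2*g) :
    aM g i * aM g (i+1) * aM g i = aM g (i+1) * aM g i * aM g (i+1) := by
  have h := πM_rel (g := g) (Or.inl ⟨i, h1, h2, rfl⟩)
  simp only [map_mul, map_inv, πM_aF] at h
  exact mul_inv_eq_one.mp h

lemma commM {g : ℕ} (i j : ℕ) (h1 : 1 ≤ i) (h2 : j ≤ 2*g) (h3 : i+2 ≤ j) :
    aM g i * aM g j = aM g j * aM g i := by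
  have h := πM_rel (g := g) (Or.inr (Or.inl ⟨i, j, h1, h2, h3, rfl⟩))
  simp only [map_mul, map_inv, πM_aF] at h
  exact mul_inv_eq_one.mp h

lemma dcommM {g : ℕ} (j : ℕ) (h1 : 1 ≤ j) (h2 : j ≤ 2*g) (h3 : j ≠ 4) :
    dM g * aM g j = aM g j * dM g := by
  have h := πM_rel (g := g) (Or.inr (Or.inr (Or.inr (Or.inl ⟨j, h1, h2, h3, rfl⟩))))
  simp only [map_mul, map_inv, πM_aF, πM_dF] at h
  exact mul_inv_eq_one.mp h

lemma relBM (g : ℕ) :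
    dM g * dpA (dM g) (aM g) = (aM g 1 * aM g 2 * aM g 3)^4 := by
  have h := πM_rel (g := g) (Or.inr (Or.inr (Or.inr (Or.inr (Or.inl rfl)))))
  rw [map_mul, map_mul, map_inv, map_pow] at h
  rw [πM_dpA, πM_dF] at h
  simp only [map_mul, πM_aF] at h
  exact mul_inv_eq_one.mp h

end GammaAux

/-! ## STATEMENT 13 -/

/-- Equation (5.8): in `Γ_{g,1}`, for `5 ≤ i ≤ g+1`, `y_i` anti-commutes with
`d⁻¹d′`: `y_i d⁻¹ d′ = d d′⁻¹ y_i`, equivalently `d⁻¹ d′ y_i = y_i d d′⁻¹`. -/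
theorem y_anticommutes_with_d_inv_dprime
    (g : ℕ) (hg : 4 ≤ g) :
    ∀ i : ℕ, 5 ≤ i → i ≤ g + 1 →
      genY (aM g) i * (dM g)⁻¹ * dpA (dM g) (aM g) =
        dM g * (dpA (dM g) (aM g))⁻¹ * genY (aM g) i ∧
      (dM g)⁻¹ * dpA (dM g) (aM g) * genY (aM g) i =
        genY (aM g) i * dM g * (dpA (dM g) (aM g))⁻¹ := by
  obtain ⟨Dp, hDpdef⟩ : ∃ x : Gamma1 g, x = dpA (dM g) (aM g) := ⟨_, rfl⟩
  rw [← hDpdef]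
  have h12 := braidM (g := g) 1 (by omega) (by omega)
  have h23 := braidM (g := g) 2 (by omega) (by omega)
  have h34 := braidM (g := g) 3 (by omega) (by omega)
  have h13 := commM (g := g) 1 3 (by omega) (by omega) (by omega)
  have h14 := commM (g := g) 1 4 (by omega) (by omega) (by omega)
  have h24 := commM (g := g) 2 4 (by omega) (by omega) (by omega)
  have hd1 := dcommM (g := g) 1 (by omega) (by omega) (by omega)
  have hd2 := dcommM (g := g) 2 (by omega) (by omega) (by omega)
  have hd3 := dcommM (g := g) 3 (by omega) (by omega) (by omega)
  have hy5 : genY (aM g) 5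
      = aM g 4*(aM g 3*(aM g 2*(aM g 1*aM g 1)*aM g 2)*aM g 3)*aM g 4 := rfl
  have hp : Dp = genY (aM g) 5 * dM g * (genY (aM g) 5)⁻¹ := by rw [hDpdef]; rfl
  have hB : dM g * Dp = (aM g 1 * aM g 2 * aM g 3)^4 := by rw [hDpdef]; exact relBM g
  obtain ⟨out1, base⟩ := anticonj (aM g 1) (aM g 2) (aM g 3) (aM g 4) (dM g)
    (genY (aM g) 5) Dp h12 h23 h34 h13 h14 h24 hd1 hd2 hd3 hy5 hp hB
  obtain ⟨u, hu⟩ : ∃ x : Gamma1 g, x = (dM g)⁻¹ * Dp := ⟨_, rfl⟩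
  rw [← hu] at base
  have hdpw : Dp = (dM g)⁻¹ * (aM g 1 * aM g 2 * aM g 3)^4 := by
    rw [← hB, inv_mul_cancel_left]
  have key : ∀ i : ℕ, 5 ≤ i → i ≤ g+1 →
      genY (aM g) i * u = u⁻¹ * genY (aM g) i := by
    intro i hi
    induction i, hi using Nat.le_induction with
    | base => exact fun _ => base
    | succ n hn ih =>
      intro hle
      have hrec := ih (by omega)
      have cD : Commute (aM g n) (dM g) :=
        (show Commute (dM g) (aM g n) from dcommM n (by omega) (by omega) (by omega)).symm
      have c1 : Commute (aM g n) (aM g 1) :=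
        (show Commute (aM g 1) (aM g n) from commM 1 n (by omega) (by omega) (by omega)).symm
      have c2 : Commute (aM g n) (aM g 2) :=
        (show Commute (aM g 2) (aM g n) from commM 2 n (by omega) (by omega) (by omega)).symm
      have c3 : Commute (aM g n) (aM g 3) :=
        (show Commute (aM g 3) (aM g n) from commM 3 n (by omega) (by omega) (by omega)).symm
      have cDp : Commute (aM g n) Dp := by
        rw [hdpw]
        exact cD.inv_right.mul_right (((c1.mul_right c2).mul_right c3).pow_right 4)
      have cu : Commute (aM g n) u := by
        rw [hu]; exact cD.inv_right.mul_right cDp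
      obtain ⟨k, hk⟩ := Nat.exists_eq_add_of_le' hn
      have hstep : genY (aM g) (n+1) = aM g n * genY (aM g) n * aM g n := by
        subst hk; rfl
      calc genY (aM g) (n+1) * u
          = aM g n * (genY (aM g) n * (aM g n * u)) := by
            rw [hstep]; simp only [mul_assoc]
        _ = aM g n * (genY (aM g) n * (u * aM g n)) := by rw [cu.eq]
        _ = aM g n * ((genY (aM g) n * u) * aM g n) := by simp only [mul_assoc]
        _ = aM g n * ((u⁻¹ * genY (aM g) n) * aM g n) := by rw [hrec]
        _ = (aM g n * u⁻¹) * (genY (aM g) n * aM g n) := by simp only [mul_assoc]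
        _ = (u⁻¹ * aM g n) * (genY (aM g) n * aM g n) := by rw [cu.inv_right.eq]
        _ = u⁻¹ * genY (aM g) (n+1) := by rw [hstep]; simp only [mul_assoc]
  intro i h5 hle
  have ku := key i h5 hle
  have star : u⁻¹ * (genY (aM g) i)⁻¹ = (genY (aM g) i)⁻¹ * u := by
    rw [← mul_inv_rev, ku, mul_inv_rev, inv_inv]
  have ku2 : u * genY (aM g) i = genY (aM g) i * u⁻¹ := by
    calc u * genY (aM g) i
        = genY (aM g) i * ((genY (aM g) i)⁻¹ * (u * genY (aM g) i)) := by
          rw [mul_inv_cancel_left]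
      _ = genY (aM g) i * (((genY (aM g) i)⁻¹ * u) * genY (aM g) i) := by rw [mul_assoc]
      _ = genY (aM g) i * ((u⁻¹ * (genY (aM g) i)⁻¹) * genY (aM g) i) := by rw [← star]
      _ = genY (aM g) i * u⁻¹ := by rw [inv_mul_cancel_right]
  have hcDDp : Commute (dM g) Dp := out1
  constructor
  · calc genY (aM g) i * (dM g)⁻¹ * Dp
        = genY (aM g) i * u := by rw [mul_assoc, ← hu]
      _ = u⁻¹ * genY (aM g) i := ku
      _ = (Dp⁻¹ * dM g) * genY (aM g) i := by rw [hu, mul_inv_rev, inv_inv]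
      _ = (dM g * Dp⁻¹) * genY (aM g) i := by rw [hcDDp.inv_right.eq]
      _ = dM g * Dp⁻¹ * genY (aM g) i := rfl
  · calc (dM g)⁻¹ * Dp * genY (aM g) i
        = u * genY (aM g) i := by rw [← hu]
      _ = genY (aM g) i * u⁻¹ := ku2
      _ = genY (aM g) i * (Dp⁻¹ * dM g) := by rw [hu, mul_inv_rev, inv_inv]
      _ = genY (aM g) i * (dM g * Dp⁻¹) := by rw [hcDDp.inv_right.eq]
      _ = genY (aM g) i * dM g * Dp⁻¹ := by rw [mul_assoc]
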